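/- Let p be a prime, X = (V, E, s, t) a finite connected directed multigraph with V nonempty, and n ≥ 1. Let X_n = X(ℤ/p^nℤ, α) be the derived graph for the constant voltage assignment α with value 1 ∈ ℤ/p^nℤ, and let U_n be the subgroup of ℤ/p^nℤ generated by the residues modulo p^n of the weights of all closed walks of X. Then the number of connected components of X_n equals the index [ℤ/p^nℤ : U_n]. -/
import Mathlib


/-- A directed multigraph: a vertex type `V`, an edge type `E`, and source/target maps. -/
structure DirMultigraph (V E : Type*) where
  s : E → V
  t : E → V

/-- The adjacency relation: there is an edge with source `x` and target `y`. -/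
def DirMultigraph.Adj {V E : Type*} (X : DirMultigraph V E) (x y : V) : Prop :=
  ∃ e, X.s e = x ∧ X.t e = y

/-- A directed multigraph is connected if any two vertices are related by the
reflexive-transitive-symmetric closure of the adjacency relation. -/
def DirMultigraph.Connected {V E : Type*} (X : DirMultigraph V E) : Prop :=
  ∀ x y : V, Relation.EqvGen X.Adj x y

/-- The set of connected components: the quotient of the vertex set by the
reflexive-transitive-symmetric closure of the adjacency relation. -/
def DirMultigraph.Components {V E : Type*} (X : DirMultigraph V E) : Type _ :=
  Quot X.Adj

/-- The derived graph `X(G, α)` of a voltage assignment `α : E → G`: vertices `V × G`,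
edges `E × G`, where the edge `(e, σ)` goes from `(s e, σ)` to `(t e, σ + α e)`. -/
def DirMultigraph.derived {V E G : Type*} [AddCommGroup G]
    (X : DirMultigraph V E) (α : E → G) : DirMultigraph (V × G) (E × G) where
  s := fun q => (X.s q.1, q.2)
  t := fun q => (X.t q.1, q.2 + α q.1)

/-- `WalkW X u v k` holds if there is a walk from `u` to `v` in which edges may be traversed
forwards or backwards, of weight `k` = (number of forwards steps) − (number of backwards
steps). -/
inductive DirMultigraph.WalkW {V E : Type*} (X : DirMultigraph V E) : V → V → ℤ → Prop
  | nil (v : V) : WalkW X v v 0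
  | fwd {u v w : V} {k : ℤ} (e : E) (h : WalkW X u v k) (hs : X.s e = v) (ht : X.t e = w) :
      WalkW X u w (k + 1)
  | bwd {u v w : V} {k : ℤ} (e : E) (h : WalkW X u v k) (ht : X.t e = v) (hs : X.s e = w) :
      WalkW X u w (k - 1)

namespace DirMultigraph
variable {V E : Type*} {X : DirMultigraph V E}

lemma WalkW.castW {u v : V} {k k' : ℤ} (h : X.WalkW u v k) (e : k = k') : X.WalkW u v k' :=
  e ▸ h

lemma WalkW.comp {u v w : V} {k l : ℤ} (h1 : X.WalkW u v k) (h2 : X.WalkW v w l) :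
    X.WalkW u w (k + l) := by
  induction h2 with
  | nil => simpa using h1
  | fwd e h hs ht ih => exact (WalkW.fwd e ih hs ht).castW (by ring)
  | bwd e h ht hs ih => exact (WalkW.bwd e ih ht hs).castW (by ring)

lemma WalkW.rev {u v : V} {k : ℤ} (h : X.WalkW u v k) : X.WalkW v u (-k) := by
  induction h with
  | nil => exact WalkW.nil _
  | fwd e h hs ht ih =>
      exact ((WalkW.bwd e (WalkW.nil _) ht hs).comp ih).castW (by ring)
  | bwd e h ht hs ih =>
      exact ((WalkW.fwd e (WalkW.nil _) hs ht).comp ih).castW (by ring)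

lemma exists_walk (hX : X.Connected) (u v : V) : ∃ k, X.WalkW u v k := by
  induction hX u v with
  | rel a b h => obtain ⟨e, hs, ht⟩ := h; exact ⟨1, (WalkW.fwd e (.nil a) hs ht).castW (by ring)⟩
  | refl a => exact ⟨0, .nil a⟩
  | symm a b _ ih => obtain ⟨k, w⟩ := ih; exact ⟨-k, w.rev⟩
  | trans a b c _ _ ih1 ih2 =>
      obtain ⟨k, w1⟩ := ih1; obtain ⟨l, w2⟩ := ih2; exact ⟨k + l, w1.comp w2⟩

variable {R : Type*} [CommRing R]

lemma walk_to_eqv {u v : V} {k : ℤ} (h : X.WalkW u v k) (σ : R) :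
    Relation.EqvGen (X.derived (fun _ : E => (1 : R))).Adj (u, σ) (v, σ + (k : R)) := by
  induction h with
  | nil => simpa using Relation.EqvGen.refl (_, σ)
  | @fwd v w k e h hs ht ih =>
      refine ih.trans _ _ _ (Relation.EqvGen.rel _ _ ⟨(e, σ + (k : R)), ?_, ?_⟩)
      · simp [derived, hs]
      · simp only [derived]
        rw [ht]
        push_cast
        ring_nf
  | @bwd v w k e h ht hs ih =>
      refine ih.trans _ _ _ ((Relation.EqvGen.rel _ _ ⟨(e, σ + ((k - 1 : ℤ) : R)), ?_, ?_⟩).symm _ _)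
      · simp [derived, hs]
      · simp only [derived]
        rw [ht]
        push_cast
        ring_nf

lemma eqv_to_walk {a b : V × R}
    (h : Relation.EqvGen (X.derived (fun _ : E => (1 : R))).Adj a b) :
    ∃ k : ℤ, X.WalkW a.1 b.1 k ∧ b.2 = a.2 + (k : R) := by
  induction h with
  | rel a b hab =>
      obtain ⟨⟨e, σ⟩, hs, ht⟩ := hab
      subst hs; subst ht
      refine ⟨1, (WalkW.fwd e (.nil _) rfl rfl).castW (by ring), by push_cast; rfl⟩
  | refl a => exact ⟨0, .nil _, by simp⟩
  | symm a b _ ih =>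
      obtain ⟨k, w, hk⟩ := ih
      exact ⟨-k, w.rev, by rw [hk]; push_cast; ring⟩
  | trans a b c _ _ ih1 ih2 =>
      obtain ⟨k, w1, hk⟩ := ih1
      obtain ⟨l, w2, hl⟩ := ih2
      exact ⟨k + l, w1.comp w2, by rw [hl, hk]; push_cast; ring⟩

end DirMultigraph

/-- Let `X` be a finite connected directed multigraph, `Xₙ = X(ℤ/pⁿℤ, α)` the derived graph of
the constant voltage assignment with value `1`, and `Uₙ ≤ ℤ/pⁿℤ` the subgroup generated by the
residues mod `pⁿ` of the weights of all closed walks of `X`. Then the number of connected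
components of `Xₙ` equals the index `[ℤ/pⁿℤ : Uₙ]`. -/
theorem card_components_derived_eq_index {p : ℕ} [Fact p.Prime] {V E : Type*}
    [Fintype V] [Fintype E] [Nonempty V] (X : DirMultigraph V E) (hX : X.Connected)
    (n : ℕ) (hn : 1 ≤ n) :
    Nat.card (X.derived (fun _ : E => (1 : ZMod (p ^ n)))).Components
      = (AddSubgroup.closure
          {x : ZMod (p ^ n) | ∃ k : ℤ, (∃ v : V, X.WalkW v v k) ∧ (k : ZMod (p ^ n)) = x}).index
    := by
  classical
  set G := ZMod (p ^ n)
  obtain ⟨v0⟩ := ‹Nonempty V›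
  -- choice of walk weights from v0
  choose kv hkv using DirMultigraph.exists_walk hX v0
  -- the subgroup of weights of closed walks at v0
  set U : AddSubgroup G :=
    { carrier := {x : G | ∃ m : ℤ, X.WalkW v0 v0 m ∧ (m : G) = x}
      zero_mem' := ⟨0, .nil _, by simp⟩
      add_mem' := by
        rintro a b ⟨m, wm, rfl⟩ ⟨l, wl, rfl⟩
        exact ⟨m + l, wm.comp wl, by push_cast; ring⟩
      neg_mem' := by
        rintro a ⟨m, wm, rfl⟩
        exact ⟨-m, wm.rev, by push_cast; ring⟩ } with hU
  have hUmem : ∀ x : G, x ∈ U ↔ ∃ m : ℤ, X.WalkW v0 v0 m ∧ (m : G) = x := fun x => Iff.rfl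
  -- the closure in the statement equals U
  have hclos : AddSubgroup.closure
      {x : G | ∃ k : ℤ, (∃ v : V, X.WalkW v v k) ∧ (k : G) = x} = U := by
    apply le_antisymm
    · rw [AddSubgroup.closure_le]
      rintro x ⟨k, ⟨v, wv⟩, rfl⟩
      refine ⟨kv v + k + -(kv v), ((hkv v).comp wv).comp (hkv v).rev, by push_cast; ring⟩
    · rintro x ⟨m, wm, rfl⟩
      exact AddSubgroup.subset_closure ⟨m, ⟨v0, wm⟩, rfl⟩
  rw [hclos]
  -- build the bijection Components ≃ G ⧸ U
  have hresp : ∀ a b : V × G, (X.derived (fun _ : E => (1 : G))).Adj a b →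
      ((a.2 - (kv a.1 : G) : G) : G ⧸ U) = ((b.2 - (kv b.1 : G) : G) : G ⧸ U) := by
    rintro a b ⟨⟨e, σ⟩, hs, ht⟩
    subst hs; subst ht
    rw [QuotientAddGroup.eq]
    refine ⟨kv (X.s e) + 1 + -(kv (X.t e)),
      ((DirMultigraph.WalkW.fwd e (hkv (X.s e)) rfl rfl).comp (hkv (X.t e)).rev), ?_⟩
    simp only [DirMultigraph.derived]
    push_cast
    ring
  let f : (X.derived (fun _ : E => (1 : G))).Components → G ⧸ U :=
    Quot.lift (fun a => ((a.2 - (kv a.1 : G) : G) : G ⧸ U)) hresp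
  have hbij : Function.Bijective f := by
    constructor
    · rintro ⟨a⟩ ⟨b⟩ hab
      obtain ⟨v, σ⟩ := a
      obtain ⟨w, τ⟩ := b
      simp only [f] at hab
      rw [QuotientAddGroup.eq] at hab
      obtain ⟨m, wm, hm⟩ := hab
      have wvw : X.WalkW v w (-(kv v) + m + kv w) := ((hkv v).rev.comp wm).comp (hkv w)
      have hτ : τ = σ + ((-(kv v) + m + kv w : ℤ) : G) := by
        push_cast
        rw [hm]
        ring
      rw [hτ]
      exact Quot.eqvGen_sound (DirMultigraph.walk_to_eqv wvw σ)
    · intro x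
      obtain ⟨σ, rfl⟩ := QuotientAddGroup.mk_surjective x
      refine ⟨Quot.mk _ (v0, σ + (kv v0 : G)), ?_⟩
      simp [f]
  rw [Nat.card_congr (Equiv.ofBijective f hbij)]
  rfl
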